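/- arXiv:1201.0836 — 3 statements merged into one kernel-verified Lean document; each statement's English description precedes it below -/
import Mathlib

section
/- Let S_n be a random walk with i.i.d. jumps with positive mean μ, set γ := P(inf_{k≥0} S_k = 0) and F_+(Δ) := P(ξ ≥ Δ). If Δ > 0 satisfies F_+(Δ) > 0, then for any n ≥ 1, the sum over k = 1, ..., n of P(S_k ∈ [x, x+Δ)) is at most P(max_{j≤n} S_j ≥ x) / (γ F_+(Δ)). -/
open MeasureTheory ProbabilityTheory Filter

section Aux

variable {Ω : Type*} [MeasureSpace Ω] [IsProbabilityMeasure (ℙ : Measure Ω)]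

set_option linter.unusedSectionVars false

lemma aux_joint_law {M : ℕ} (f : Fin M → Ω → ℝ) (hmeas : ∀ i, Measurable (f i))
    (hindep : iIndepFun f ℙ) :
    Measure.map (fun ω i => f i ω) ℙ = Measure.pi (fun i => Measure.map (f i) ℙ) := by
  have : ∀ i, IsProbabilityMeasure (Measure.map (f i) ℙ) :=
    fun i => Measure.isProbabilityMeasure_map (hmeas i).aemeasurable
  refine (Measure.pi_eq fun s hs => ?_).symm
  rw [Measure.map_apply (measurable_pi_lambda _ hmeas) (MeasurableSet.univ_pi hs)]
  have h1 : (fun ω i => f i ω) ⁻¹' Set.pi Set.univ s = ⋂ i ∈ Finset.univ, f i ⁻¹' s i := by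
    ext ω; simp [Set.mem_pi]
  rw [h1, hindep.measure_inter_preimage_eq_mul Finset.univ (fun i _ => hs i)]
  exact Finset.prod_congr rfl fun i _ => (Measure.map_apply (hmeas i) (hs i)).symm

lemma aux_reindex {M : ℕ} (ξ : ℕ → Ω → ℝ)
    (hindep : iIndepFun ξ ℙ)
    (g : Fin M → ℕ) (hg : Function.Injective g) :
    iIndepFun (fun i => ξ (g i)) ℙ := by
  classical
  rw [iIndepFun_iff_measure_inter_preimage_eq_mul]
  intro S sets hsets
  set sets' : ℕ → Set ℝ := fun n => if h : ∃ i ∈ S, g i = n then sets h.choose else Set.univ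
    with hsets'def
  have hkey : ∀ i ∈ S, sets' (g i) = sets i := by
    intro i hi
    have h : ∃ j ∈ S, g j = g i := ⟨i, hi, rfl⟩
    rw [hsets'def]
    simp only [dif_pos h]
    exact congrArg sets (hg h.choose_spec.2)
  have hmeas' : ∀ n ∈ S.image g, MeasurableSet (sets' n) := by
    intro n hn
    simp only [Finset.mem_image] at hn
    obtain ⟨i, hi, rfl⟩ := hn
    rw [hkey i hi]
    exact hsets i hi
  have hinter : (⋂ i ∈ S, ξ (g i) ⁻¹' sets i) = ⋂ n ∈ S.image g, ξ n ⁻¹' sets' n := by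
    ext ω
    simp only [Set.mem_iInter, Finset.mem_image]
    constructor
    · rintro h n ⟨i, hi, rfl⟩
      rw [hkey i hi]; exact h i hi
    · intro h i hi
      rw [← hkey i hi]; exact h (g i) ⟨i, hi, rfl⟩
  rw [hinter, hindep.measure_inter_preimage_eq_mul (S.image g) hmeas',
    Finset.prod_image (fun i _ j _ h => hg h)]
  exact Finset.prod_congr rfl fun i hi => by rw [hkey i hi]

lemma aux_shift (ξ : ℕ → Ω → ℝ) (hmeas : ∀ n, Measurable (ξ n))
    (hindep : iIndepFun ξ ℙ)
    (hident : ∀ n, IdentDistrib (ξ n) (ξ 0) ℙ ℙ) (s : ℕ) :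
    ℙ {ω | ∀ m : ℕ, 0 ≤ ∑ i ∈ Finset.range m, ξ (s + i) ω}
      = ℙ {ω | ∀ m : ℕ, 0 ≤ ∑ i ∈ Finset.range m, ξ i ω} := by
  classical
  set B : (M : ℕ) → Set (Fin M → ℝ) := fun M =>
    {v | ∀ m : ℕ, m ≤ M → 0 ≤ ∑ i ∈ Finset.range m,
      (if h : i < M then v ⟨i, h⟩ else 0)} with hBdef
  have hBmeas : ∀ M, MeasurableSet (B M) := by
    intro M
    have : B M = ⋂ (m : ℕ) (_ : m ≤ M),
        {v : Fin M → ℝ | 0 ≤ ∑ i ∈ Finset.range m, (if h : i < M then v ⟨i, h⟩ else 0)} := by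
      ext v; simp [hBdef]
    rw [this]
    refine MeasurableSet.iInter fun m => MeasurableSet.iInter fun _ => ?_
    refine measurableSet_le measurable_const ?_
    refine Finset.measurable_sum _ fun i _ => ?_
    by_cases h : i < M
    · simpa [h] using measurable_pi_apply (⟨i, h⟩ : Fin M)
    · simp [h]
  have key : ∀ (t : ℕ) (M : ℕ),
      ℙ {ω | ∀ m : ℕ, m ≤ M → 0 ≤ ∑ i ∈ Finset.range m, ξ (t + i) ω}
        = Measure.pi (fun _ : Fin M => Measure.map (ξ 0) ℙ) (B M) := by
    intro t M
    have hinj : Function.Injective (fun i : Fin M => t + (i : ℕ)) := by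
      intro a b hab
      simp only at hab
      exact Fin.ext (by omega)
    have hind' := aux_reindex ξ hindep (fun i : Fin M => t + (i : ℕ)) hinj
    have hmeas' : ∀ i : Fin M, Measurable (ξ (t + (i : ℕ))) := fun i => hmeas _
    have hlaw := aux_joint_law (fun i : Fin M => ξ (t + (i : ℕ))) hmeas' hind'
    have hpre : {ω | ∀ m : ℕ, m ≤ M → 0 ≤ ∑ i ∈ Finset.range m, ξ (t + i) ω}
        = (fun ω (i : Fin M) => ξ (t + (i : ℕ)) ω) ⁻¹' B M := by
      ext ω
      simp only [Set.mem_setOf_eq, Set.mem_preimage, hBdef]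
      constructor
      · intro h m hm
        rw [show (∑ i ∈ Finset.range m,
            (if h : i < M then ξ (t + (⟨i, h⟩ : Fin M) : ℕ) ω else 0))
            = ∑ i ∈ Finset.range m, ξ (t + i) ω from
          Finset.sum_congr rfl fun i hi => by
            have : i < M := lt_of_lt_of_le (Finset.mem_range.mp hi) hm
            simp [this]]
        exact h m hm
      · intro h m hm
        have := h m hm
        rwa [show (∑ i ∈ Finset.range m,
            (if h : i < M then ξ (t + (⟨i, h⟩ : Fin M) : ℕ) ω else 0))
            = ∑ i ∈ Finset.range m, ξ (t + i) ω from
          Finset.sum_congr rfl fun i hi => by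
            have : i < M := lt_of_lt_of_le (Finset.mem_range.mp hi) hm
            simp [this]] at this
    rw [hpre, ← Measure.map_apply (measurable_pi_lambda _ hmeas') (hBmeas M), hlaw]
    have heq : (fun i : Fin M => Measure.map ((fun j : Fin M => ξ (t + (j : ℕ))) i) ℙ)
        = fun _ : Fin M => Measure.map (ξ 0) ℙ := funext fun i => (hident _).map_eq
    rw [heq]
  have keyinf : ∀ t : ℕ,
      ℙ {ω | ∀ m : ℕ, 0 ≤ ∑ i ∈ Finset.range m, ξ (t + i) ω}
        = ⨅ M : ℕ, ℙ {ω | ∀ m : ℕ, m ≤ M → 0 ≤ ∑ i ∈ Finset.range m, ξ (t + i) ω} := by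
    intro t
    set T : ℕ → Set Ω := fun M =>
      {ω | ∀ m : ℕ, m ≤ M → 0 ≤ ∑ i ∈ Finset.range m, ξ (t + i) ω} with hTdef
    have hTmeas : ∀ M, MeasurableSet (T M) := by
      intro M
      have : T M = ⋂ (m : ℕ) (_ : m ≤ M),
          {ω | 0 ≤ ∑ i ∈ Finset.range m, ξ (t + i) ω} := by
        ext ω; simp [hTdef]
      rw [this]
      exact MeasurableSet.iInter fun m => MeasurableSet.iInter fun _ =>
        measurableSet_le measurable_const (Finset.measurable_sum _ fun i _ => hmeas _)
    have hanti : Antitone T := by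
      intro a b hab ω hω m hm
      exact hω m (hm.trans hab)
    have hd : Directed (· ⊇ ·) T := hanti.directed_ge
    have hiter : {ω | ∀ m : ℕ, 0 ≤ ∑ i ∈ Finset.range m, ξ (t + i) ω} = ⋂ M, T M := by
      ext ω
      simp only [Set.mem_setOf_eq, Set.mem_iInter, hTdef]
      exact ⟨fun h M m _ => h m, fun h m => h m m le_rfl⟩
    rw [hiter]
    exact Directed.measure_iInter (fun M => (hTmeas M).nullMeasurableSet) hd
      ⟨0, measure_ne_top _ _⟩
  calc ℙ {ω | ∀ m : ℕ, 0 ≤ ∑ i ∈ Finset.range m, ξ (s + i) ω}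
      = ⨅ M : ℕ, ℙ {ω | ∀ m : ℕ, m ≤ M → 0 ≤ ∑ i ∈ Finset.range m, ξ (s + i) ω} := keyinf s
    _ = ⨅ M : ℕ, ℙ {ω | ∀ m : ℕ, m ≤ M → 0 ≤ ∑ i ∈ Finset.range m, ξ (0 + i) ω} := by
        refine iInf_congr fun M => ?_
        rw [key s M, key 0 M]
    _ = ℙ {ω | ∀ m : ℕ, 0 ≤ ∑ i ∈ Finset.range m, ξ (0 + i) ω} := (keyinf 0).symm
    _ = ℙ {ω | ∀ m : ℕ, 0 ≤ ∑ i ∈ Finset.range m, ξ i ω} := by simp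

lemma aux_indep3 (ξ : ℕ → Ω → ℝ) (hmeas : ∀ n, Measurable (ξ n))
    (hindep : iIndepFun ξ ℙ) (k : ℕ) (x Δ : ℝ) :
    ℙ (((fun ω => ∑ i ∈ Finset.range k, ξ i ω) ⁻¹' Set.Ico x (x + Δ)) ∩
        ((ξ k ⁻¹' Set.Ici Δ) ∩
          (⋂ m : ℕ, (fun ω => ∑ i ∈ Finset.range m, ξ (k + 1 + i) ω) ⁻¹' Set.Ici 0)))
      = ℙ ((fun ω => ∑ i ∈ Finset.range k, ξ i ω) ⁻¹' Set.Ico x (x + Δ)) *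
        (ℙ (ξ k ⁻¹' Set.Ici Δ) *
          ℙ (⋂ m : ℕ, (fun ω => ∑ i ∈ Finset.range m, ξ (k + 1 + i) ω) ⁻¹' Set.Ici 0)) := by
  set E := (fun ω => ∑ i ∈ Finset.range k, ξ i ω) ⁻¹' Set.Ico x (x + Δ) with hEdef
  set G := ξ k ⁻¹' Set.Ici Δ with hGdef
  set H := ⋂ m : ℕ, (fun ω => ∑ i ∈ Finset.range m, ξ (k + 1 + i) ω) ⁻¹' Set.Ici 0 with hHdef
  set m' : ℕ → MeasurableSpace Ω :=
    fun i => MeasurableSpace.comap (ξ i) inferInstance with hm'def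
  have h_le : ∀ i, m' i ≤ (inferInstance : MeasurableSpace Ω) := fun i => (hmeas i).comap_le
  have hiI : iIndep m' ℙ := hindep.iIndep
  have hmeas_sup : ∀ (t : Set ℕ) (i : ℕ), i ∈ t → Measurable[⨆ j ∈ t, m' j] (ξ i) :=
    fun t i hi => Measurable.of_comap_le (le_biSup m' hi)
  have Ind1 := indep_biSup_compl h_le hiI {i | i < k}
  have hEmeas : MeasurableSet[⨆ j ∈ {i | i < k}, m' j] E := by
    refine Finset.measurable_sum (Finset.range k)
      (fun i hi => hmeas_sup _ i (Finset.mem_range.mp hi)) measurableSet_Ico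
  have hGmeas1 : MeasurableSet[⨆ j ∈ {i | i < k}ᶜ, m' j] G :=
    hmeas_sup _ k (by simp) measurableSet_Ici
  have hHmeas1 : MeasurableSet[⨆ j ∈ {i | i < k}ᶜ, m' j] H := by
    refine MeasurableSet.iInter fun m => ?_
    exact Finset.measurable_sum (Finset.range m)
      (fun i _ => hmeas_sup _ (k + 1 + i) (by simp; omega)) measurableSet_Ici
  have h1 : ℙ (E ∩ (G ∩ H)) = ℙ E * ℙ (G ∩ H) :=
    (Indep_iff _ _ _).mp Ind1 E (G ∩ H) hEmeas (hGmeas1.inter hHmeas1)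
  have Ind2 := indep_biSup_compl h_le hiI {k}
  have hGmeas2 : MeasurableSet[⨆ j ∈ ({k} : Set ℕ), m' j] G :=
    hmeas_sup ({k} : Set ℕ) k (Set.mem_singleton k) measurableSet_Ici
  have hHmeas2 : MeasurableSet[⨆ j ∈ ({k} : Set ℕ)ᶜ, m' j] H := by
    refine MeasurableSet.iInter fun m => ?_
    exact Finset.measurable_sum (Finset.range m)
      (fun i _ => hmeas_sup _ (k + 1 + i) (by simp; omega)) measurableSet_Ici
  have h2 : ℙ (G ∩ H) = ℙ G * ℙ H :=
    (Indep_iff _ _ _).mp Ind2 G H hGmeas2 hHmeas2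
  rw [h1, h2]

lemma aux_bdd (ξ : ℕ → Ω → ℝ) (hmeas : ∀ n, Measurable (ξ n))
    (hindep : iIndepFun ξ ℙ)
    (hident : ∀ n, IdentDistrib (ξ n) (ξ 0) ℙ ℙ)
    (hint : Integrable (ξ 0) ℙ)
    (hμpos : 0 < ∫ ω, ξ 0 ω ∂ℙ) :
    ℙ {ω | ¬ BddBelow (Set.range fun m => ∑ i ∈ Finset.range m, ξ i ω)} = 0 := by
  have hpair : Pairwise (Function.onFun (IndepFun · · ℙ) ξ) := fun i j hij => hindep.indepFun hij
  have hae := strong_law_ae_real ξ hint hpair hident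
  rw [← ae_iff]
  filter_upwards [hae] with ω hω
  have hL : (0 : ℝ) < ∫ ω, ξ 0 ω ∂ℙ := hμpos
  have h2 : Tendsto (fun m : ℕ => ((∑ i ∈ Finset.range m, ξ i ω) / m) * m) atTop atTop :=
    Filter.Tendsto.pos_mul_atTop hL hω tendsto_natCast_atTop_atTop
  have h3 : Tendsto (fun m : ℕ => ∑ i ∈ Finset.range m, ξ i ω) atTop atTop := by
    refine h2.congr' ?_
    filter_upwards [eventually_ge_atTop 1] with m hm
    have : (m : ℝ) ≠ 0 := by positivity
    field_simp
  exact bddBelow_range_of_tendsto_atTop_atTop h3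

end Aux

/-- For a random walk with i.i.d. jumps with positive mean, if
`F₊(Δ) = P(ξ ≥ Δ) > 0` then for any `n ≥ 1`,
`∑_{k=1}^n P(S k ∈ [x, x+Δ)) ≤ P(max_{j ≤ n} S j ≥ x) / (γ F₊(Δ))`,
where `γ = P(inf_{k ≥ 0} S k = 0)`. -/
theorem stmt1 {Ω : Type*} [MeasureSpace Ω] [IsProbabilityMeasure (ℙ : Measure Ω)]
    (ξ : ℕ → Ω → ℝ)
    (hmeas : ∀ n, Measurable (ξ n))
    (hindep : iIndepFun ξ ℙ)
    (hident : ∀ n, IdentDistrib (ξ n) (ξ 0) ℙ ℙ)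
    (hint : Integrable (ξ 0) ℙ)
    (hμpos : 0 < ∫ ω, ξ 0 ω ∂ℙ)
    (S : ℕ → Ω → ℝ) (hS : ∀ n ω, S n ω = ∑ i ∈ Finset.range n, ξ i ω)
    (γ : ENNReal) (hγ : γ = ℙ {ω | (⨅ k : ℕ, S k ω) = 0})
    (x Δ : ℝ) (hΔ : 0 < Δ)
    (hF : 0 < ℙ {ω | Δ ≤ ξ 0 ω})
    (n : ℕ) (hn : 1 ≤ n) :
    ∑ k ∈ Finset.Icc 1 n, ℙ {ω | S k ω ∈ Set.Ico x (x + Δ)} ≤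
      ℙ {ω | ∃ j ≤ n, x ≤ S j ω} / (γ * ℙ {ω | Δ ≤ ξ 0 ω}) := by
  classical
  set F := ℙ {ω | Δ ≤ ξ 0 ω} with hFdef
  set A := {ω | ∃ j ≤ n, x ≤ S j ω} with hAdef
  set γ₀ := ℙ {ω | ∀ m : ℕ, 0 ≤ ∑ i ∈ Finset.range m, ξ i ω} with hγ₀def
  set E : ℕ → Set Ω :=
    fun k => (fun ω => ∑ i ∈ Finset.range k, ξ i ω) ⁻¹' Set.Ico x (x + Δ) with hEdef
  set G : ℕ → Set Ω := fun k => ξ k ⁻¹' Set.Ici Δ with hGdef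
  set H : ℕ → Set Ω :=
    fun k => ⋂ m : ℕ, (fun ω => ∑ i ∈ Finset.range m, ξ (k + 1 + i) ω) ⁻¹' Set.Ici 0 with hHdef
  set Bev : ℕ → Set Ω := fun k => E k ∩ (G k ∩ H k) with hBdef
  have hmeasE : ∀ k, MeasurableSet (E k) := fun k =>
    (Finset.measurable_sum _ fun i _ => hmeas i) measurableSet_Ico
  have hmeasB : ∀ k, MeasurableSet (Bev k) := fun k =>
    (hmeasE k).inter (((hmeas k) measurableSet_Ici).inter
      (MeasurableSet.iInter fun m =>
        (Finset.measurable_sum _ fun i _ => hmeas _) measurableSet_Ici))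
  have hset : ∀ k, {ω | S k ω ∈ Set.Ico x (x + Δ)} = E k := by
    intro k; ext ω; simp [hEdef, hS k ω]
  have hEsubA : ∀ k ∈ Finset.Icc 1 n, E k ⊆ A := by
    intro k hk ω hω
    exact ⟨k, (Finset.mem_Icc.mp hk).2, by rw [hS]; exact hω.1⟩
  -- disjointness
  have hdisj : (↑(Finset.Icc 1 n) : Set ℕ).PairwiseDisjoint Bev := by
    have key : ∀ a b : ℕ, a < b → Disjoint (Bev a) (Bev b) := by
      intro a b hlt
      refine Set.disjoint_left.mpr fun ω hωa hωb => ?_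
      obtain ⟨hEa, hGa, hHa⟩ := hωa
      obtain ⟨hEb, -, -⟩ := hωb
      have hsplit : ∑ i ∈ Finset.range b, ξ i ω
          = (∑ i ∈ Finset.range (a + 1), ξ i ω)
            + ∑ i ∈ Finset.range (b - (a + 1)), ξ (a + 1 + i) ω := by
        have h := Finset.sum_range_add (fun i => ξ i ω) (a + 1) (b - (a + 1))
        rw [show (a + 1) + (b - (a + 1)) = b by omega] at h
        exact h
      have h1 : x + Δ ≤ ∑ i ∈ Finset.range (a + 1), ξ i ω := by
        rw [Finset.sum_range_succ]
        have hxa : x ≤ ∑ i ∈ Finset.range a, ξ i ω := hEa.1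
        have hΔa : Δ ≤ ξ a ω := hGa
        linarith
      have h2 : 0 ≤ ∑ i ∈ Finset.range (b - (a + 1)), ξ (a + 1 + i) ω := by
        have := Set.mem_iInter.mp hHa (b - (a + 1))
        exact this
      have h3 : ∑ i ∈ Finset.range b, ξ i ω < x + Δ := hEb.2
      rw [hsplit] at h3
      linarith
    intro a ha b hb hab
    rcases lt_or_gt_of_ne hab with h | h
    · exact key a b h
    · exact (key b a h).symm
  -- product formula
  have hPB : ∀ k, ℙ (Bev k) = ℙ (E k) * (F * γ₀) := by
    intro k
    have := aux_indep3 ξ hmeas hindep k x Δ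
    rw [hBdef]
    simp only [hEdef, hGdef, hHdef]
    rw [this]
    congr 1
    congr 1
    · rw [hFdef]
      have := (hident k).measure_mem_eq (measurableSet_Ici (a := Δ))
      exact this
    · have := aux_shift ξ hmeas hindep hident (k + 1)
      rw [hγ₀def, ← this]
      congr 1
      ext ω
      simp [Set.mem_iInter]
  -- sum bound
  have hsum : ∑ k ∈ Finset.Icc 1 n, ℙ (Bev k) ≤ ℙ A := by
    rw [← measure_biUnion_finset hdisj (fun k _ => hmeasB k)]
    refine measure_mono (Set.iUnion₂_subset fun k hk => ?_)
    exact Set.Subset.trans Set.inter_subset_left (hEsubA k hk)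
  -- γ ≤ γ₀
  have hγle : γ ≤ γ₀ := by
    have hnull := aux_bdd ξ hmeas hindep hident hint hμpos
    have hsub : {ω | (⨅ k : ℕ, S k ω) = 0} ⊆
        {ω | ∀ m : ℕ, 0 ≤ ∑ i ∈ Finset.range m, ξ i ω} ∪
        {ω | ¬ BddBelow (Set.range fun m => ∑ i ∈ Finset.range m, ξ i ω)} := by
      intro ω hω
      by_cases hb : BddBelow (Set.range fun m => ∑ i ∈ Finset.range m, ξ i ω)
      · left
        intro m
        have hb' : BddBelow (Set.range fun k => S k ω) := by
          have : (fun k => S k ω) = fun m => ∑ i ∈ Finset.range m, ξ i ω :=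
            funext fun k => hS k ω
          rw [this]; exact hb
        have h := ciInf_le hb' m
        rw [Set.mem_setOf_eq.mp hω] at h
        rw [← hS m ω]
        exact h
      · right
        exact hb
    rw [hγ, hγ₀def]
    calc ℙ {ω | (⨅ k : ℕ, S k ω) = 0} ≤
        ℙ ({ω | ∀ m : ℕ, 0 ≤ ∑ i ∈ Finset.range m, ξ i ω} ∪
          {ω | ¬ BddBelow (Set.range fun m => ∑ i ∈ Finset.range m, ξ i ω)}) :=
          measure_mono hsub
      _ ≤ ℙ {ω | ∀ m : ℕ, 0 ≤ ∑ i ∈ Finset.range m, ξ i ω} +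
          ℙ {ω | ¬ BddBelow (Set.range fun m => ∑ i ∈ Finset.range m, ξ i ω)} :=
          measure_union_le _ _
      _ = ℙ {ω | ∀ m : ℕ, 0 ≤ ∑ i ∈ Finset.range m, ξ i ω} := by rw [hnull, add_zero]
  -- conclusion
  by_cases hA0 : ℙ A = 0
  · have hz : ∀ k ∈ Finset.Icc 1 n, ℙ {ω | S k ω ∈ Set.Ico x (x + Δ)} = 0 := by
      intro k hk
      rw [hset k]
      exact le_antisymm ((measure_mono (hEsubA k hk)).trans hA0.le) zero_le
    rw [Finset.sum_eq_zero hz]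
    exact zero_le
  · have hmono : ℙ A / (γ₀ * F) ≤ ℙ A / (γ * F) :=
      ENNReal.div_le_div_left (mul_le_mul_left hγle F) _
    refine le_trans ?_ hmono
    rw [ENNReal.le_div_iff_mul_le (Or.inr hA0) (Or.inr (measure_ne_top _ _))]
    calc (∑ k ∈ Finset.Icc 1 n, ℙ {ω | S k ω ∈ Set.Ico x (x + Δ)}) * (γ₀ * F)
        = ∑ k ∈ Finset.Icc 1 n, ℙ (E k) * (F * γ₀) := by
          rw [Finset.sum_mul]
          exact Finset.sum_congr rfl fun k _ => by rw [hset k, mul_comm γ₀ F]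
      _ = ∑ k ∈ Finset.Icc 1 n, ℙ (Bev k) :=
          Finset.sum_congr rfl fun k _ => (hPB k).symm
      _ ≤ ℙ A := hsum
end

section
/- Let S_n be a random walk with i.i.d. jumps with positive mean μ, γ := P(inf_{k≥0} S_k = 0), and F_+(Δ) := P(ξ ≥ Δ). If Δ > 0 satisfies F_+(Δ) > 0, then for any n ≥ 1, the sum over k ≥ n of P(S_k ∈ [x, x+Δ)) is at most P(S_n + S̲⁽ⁿ⁾ < x + Δ) / (γ F_+(Δ)), where S̲⁽ⁿ⁾ := inf_{k≥n} (S_k − S_n). -/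
open MeasureTheory ProbabilityTheory Filter

section Stmt2Aux

set_option linter.unusedSectionVars false
set_option linter.unusedVariables false

variable {Ω : Type*} [MeasureSpace Ω] [IsProbabilityMeasure (ℙ : Measure Ω)]
    {ξ : ℕ → Ω → ℝ}

lemma tupleLaw (hmeas : ∀ n, Measurable (ξ n))
    (hindep : iIndepFun ξ ℙ)
    (hident : ∀ n, IdentDistrib (ξ n) (ξ 0) ℙ ℙ)
    (c : ℕ) (I : Finset ℕ) :
    Measure.map (fun ω (i : I) => ξ (c + i) ω) ℙ
      = Measure.pi (fun _ : I => Measure.map (ξ 0) ℙ) := by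
  classical
  have hprob : IsProbabilityMeasure (Measure.map (ξ 0) ℙ) :=
    Measure.isProbabilityMeasure_map (hmeas 0).aemeasurable
  refine (Measure.pi_eq fun s hs => ?_).symm
  have hT : Measurable (fun ω (i : I) => ξ (c + i) ω) :=
    measurable_pi_lambda _ fun i => hmeas _
  rw [Measure.map_apply hT (MeasurableSet.univ_pi hs)]
  set sets : ℕ → Set ℝ := fun m => if h : m - c ∈ I then s ⟨m - c, h⟩ else Set.univ with hsets
  have hpre : (fun ω (i : I) => ξ (c + i) ω) ⁻¹' Set.pi Set.univ s
      = ⋂ i ∈ Finset.map ⟨fun i => c + i, add_right_injective c⟩ I, ξ i ⁻¹' sets i := by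
    ext ω
    simp only [Set.mem_preimage, Set.mem_pi, Set.mem_univ, forall_true_left, Set.mem_iInter,
      Finset.mem_map, Function.Embedding.coeFn_mk, forall_exists_index, and_imp]
    constructor
    · rintro h m i hi rfl
      have h2 : c + i - c = i := by omega
      simp only [sets, h2, hi, dif_pos, Set.mem_preimage]
      exact h ⟨i, hi⟩
    · intro h i
      have := h (c + ↑i) ↑i i.2 rfl
      have h2 : c + ↑i - c = (i : ℕ) := by omega
      simpa [sets, h2, i.2] using this
  rw [hpre, hindep.measure_inter_preimage_eq_mul _
    (fun i _ => by
      simp only [hsets]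
      split
      · exact hs _
      · exact MeasurableSet.univ)]
  rw [Finset.prod_map]
  simp only [Function.Embedding.coeFn_mk]
  rw [← Finset.prod_attach I (fun m => ℙ (ξ (c + m) ⁻¹' sets (c + m)))]
  rw [Finset.univ_eq_attach]
  refine Finset.prod_congr rfl fun i _ => ?_
  have h2 : c + ↑i - c = (i : ℕ) := by omega
  have h3 : sets (c + ↑i) = s i := by simp [sets, h2, i.2]
  rw [h3, Measure.map_apply (hmeas 0) (hs i),
    (hident (c + ↑i)).measure_mem_eq (hs i)]

lemma seqLaw (hmeas : ∀ n, Measurable (ξ n))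
    (hindep : iIndepFun ξ ℙ)
    (hident : ∀ n, IdentDistrib (ξ n) (ξ 0) ℙ ℙ) (c : ℕ) :
    Measure.map (fun ω (m : ℕ) => ξ (c + m) ω) ℙ
      = Measure.map (fun ω (m : ℕ) => ξ m ω) ℙ := by
  have hΦ : ∀ c : ℕ, Measurable (fun ω (m : ℕ) => ξ (c + m) ω) :=
    fun c => measurable_pi_lambda _ fun m => hmeas _
  have hΦ0 : Measurable (fun ω (m : ℕ) => ξ m ω) :=
    measurable_pi_lambda _ fun m => hmeas _
  have h1 : IsProbabilityMeasure (Measure.map (fun ω (m : ℕ) => ξ (c + m) ω) ℙ) :=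
    Measure.isProbabilityMeasure_map (hΦ c).aemeasurable
  have h2 : IsProbabilityMeasure (Measure.map (fun ω (m : ℕ) => ξ m ω) ℙ) :=
    Measure.isProbabilityMeasure_map hΦ0.aemeasurable
  refine ext_of_generate_finite (measurableCylinders fun _ : ℕ => ℝ)
    generateFrom_measurableCylinders.symm isPiSystem_measurableCylinders
    (fun t ht => ?_) (by simp)
  obtain ⟨I, T, hT, rfl⟩ := (mem_measurableCylinders t).1 ht
  have hcyl : MeasurableSet (cylinder I T) := MeasurableSet.cylinder (α := fun _ : ℕ => ℝ) I hT
  rw [Measure.map_apply (hΦ c) hcyl, Measure.map_apply hΦ0 hcyl]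
  have e1 : (fun ω (m : ℕ) => ξ (c + m) ω) ⁻¹' cylinder I T
      = (fun ω (i : I) => ξ (c + i) ω) ⁻¹' T := rfl
  have e2 : (fun ω (m : ℕ) => ξ m ω) ⁻¹' cylinder I T
      = (fun ω (i : I) => ξ (0 + i) ω) ⁻¹' T := by
    simp only [Set.preimage_setOf_eq, cylinder]
    ext ω
    simp only [zero_add]
    exact Iff.rfl
  rw [e1, e2,
    ← Measure.map_apply (measurable_pi_lambda _ fun i => hmeas _ : Measurable fun ω (i : I) => ξ (c + i) ω) hT,
    ← Measure.map_apply (measurable_pi_lambda _ fun i => hmeas _ : Measurable fun ω (i : I) => ξ (0 + i) ω) hT,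
    tupleLaw hmeas hindep hident c I, tupleLaw hmeas hindep hident 0 I]

lemma blockIndep (hmeas : ∀ n, Measurable (ξ n))
    (hindep : iIndepFun ξ ℙ) (k : ℕ) (x Δ : ℝ) :
    ℙ ({ω | (∑ i ∈ Finset.range k, ξ i ω) ∈ Set.Ico x (x + Δ)} ∩
        ({ω | Δ ≤ ξ k ω} ∩ {ω | ∀ j : ℕ, 0 ≤ ∑ m ∈ Finset.range j, ξ (k + 1 + m) ω}))
      = ℙ {ω | (∑ i ∈ Finset.range k, ξ i ω) ∈ Set.Ico x (x + Δ)} *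
        (ℙ {ω | Δ ≤ ξ k ω} * ℙ {ω | ∀ j : ℕ, 0 ≤ ∑ m ∈ Finset.range j, ξ (k + 1 + m) ω}) := by
  set mc : ℕ → MeasurableSpace Ω := fun i => MeasurableSpace.comap (ξ i) inferInstance with hmc
  have h_le : ∀ i, mc i ≤ _ := fun i => measurable_iff_comap_le.1 (hmeas i)
  have hiI : iIndep mc ℙ := (iIndepFun_iff_iIndep _ _ _).1 hindep
  have hξm : ∀ i (t : Set ℕ) (hi : i ∈ t), Measurable[⨆ j ∈ t, mc j] (ξ i) :=
    fun i t hi => Measurable.mono (measurable_iff_comap_le.2 le_rfl) (le_biSup mc hi) le_rfl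
  -- measurability of B w.r.t. sup over {i | i < k}
  have hmB : MeasurableSet[⨆ i ∈ {i : ℕ | i < k}, mc i]
      {ω | (∑ i ∈ Finset.range k, ξ i ω) ∈ Set.Ico x (x + Δ)} := by
    have hsum : Measurable[⨆ i ∈ {i : ℕ | i < k}, mc i]
        (fun ω => ∑ i ∈ Finset.range k, ξ i ω) :=
      Finset.measurable_sum _ fun i hi => hξm i _ (by simpa using Finset.mem_range.1 hi)
    exact hsum measurableSet_Ico
  have hCfun : ∀ (t : Set ℕ) (hk : k ∈ t),
      MeasurableSet[⨆ i ∈ t, mc i] {ω | Δ ≤ ξ k ω} :=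
    fun t hk => measurableSet_le measurable_const (hξm k t hk)
  have hDfun : ∀ (t : Set ℕ) (ht : ∀ m : ℕ, k + 1 + m ∈ t),
      MeasurableSet[⨆ i ∈ t, mc i]
        {ω | ∀ j : ℕ, 0 ≤ ∑ m ∈ Finset.range j, ξ (k + 1 + m) ω} := by
    intro t ht
    have : {ω | ∀ j : ℕ, 0 ≤ ∑ m ∈ Finset.range j, ξ (k + 1 + m) ω}
        = ⋂ j : ℕ, {ω | 0 ≤ ∑ m ∈ Finset.range j, ξ (k + 1 + m) ω} := by
      ext ω; simp
    rw [this]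
    exact MeasurableSet.iInter fun j => measurableSet_le measurable_const
      (Finset.measurable_sum _ fun m _ => hξm _ t (ht m))
  have step1 := indep_biSup_compl h_le hiI {i : ℕ | i < k}
  have step2 := indep_biSup_compl h_le hiI {i : ℕ | i ≤ k}
  have e1 := (Indep_iff _ _ _).1 step1 _ _ hmB
    ((hCfun _ (by simp)).inter (hDfun _ (fun m => by simp; omega)))
  have e2 := (Indep_iff _ _ _).1 step2 _ _ (hCfun _ (by simp))
    (hDfun _ (fun m => by simp; omega))
  rw [e1, e2]

lemma gammaShift (hmeas : ∀ n, Measurable (ξ n))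
    (hindep : iIndepFun ξ ℙ)
    (hident : ∀ n, IdentDistrib (ξ n) (ξ 0) ℙ ℙ) (c : ℕ) :
    ℙ {ω | ∀ j : ℕ, 0 ≤ ∑ m ∈ Finset.range j, ξ (c + m) ω}
      = ℙ {ω | ∀ j : ℕ, 0 ≤ ∑ m ∈ Finset.range j, ξ m ω} := by
  set W : Set (ℕ → ℝ) := {v | ∀ j : ℕ, 0 ≤ ∑ m ∈ Finset.range j, v m} with hW
  have hWm : MeasurableSet W := by
    have : W = ⋂ j : ℕ, {v : ℕ → ℝ | 0 ≤ ∑ m ∈ Finset.range j, v m} := by ext v; simp [hW]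
    rw [this]
    exact MeasurableSet.iInter fun j => measurableSet_le measurable_const
      (Finset.measurable_sum _ fun m _ => measurable_pi_apply m)
  have h1 : {ω | ∀ j : ℕ, 0 ≤ ∑ m ∈ Finset.range j, ξ (c + m) ω}
      = (fun ω (m : ℕ) => ξ (c + m) ω) ⁻¹' W := rfl
  have h2 : {ω | ∀ j : ℕ, 0 ≤ ∑ m ∈ Finset.range j, ξ m ω}
      = (fun ω (m : ℕ) => ξ m ω) ⁻¹' W := rfl
  rw [h1, h2, ← Measure.map_apply (measurable_pi_lambda _ fun m => hmeas _) hWm,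
    ← Measure.map_apply (measurable_pi_lambda _ fun m => hmeas _) hWm,
    seqLaw hmeas hindep hident c]

lemma badNull (hmeas : ∀ n, Measurable (ξ n))
    (hindep : iIndepFun ξ ℙ)
    (hident : ∀ n, IdentDistrib (ξ n) (ξ 0) ℙ ℙ)
    (hint : Integrable (ξ 0) ℙ) (hμpos : 0 < ∫ ω, ξ 0 ω ∂ℙ) :
    ℙ {ω | ¬ BddBelow (Set.range fun j => ∑ i ∈ Finset.range j, ξ i ω)} = 0 := by
  have hsl := strong_law_ae (μ := ℙ) ξ hint
    (fun i j hij => hindep.indepFun hij) hident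
  have hae : ∀ᵐ ω ∂ℙ, BddBelow (Set.range fun j => ∑ i ∈ Finset.range j, ξ i ω) := by
    filter_upwards [hsl] with ω hω
    have hpos : ∀ᶠ n : ℕ in atTop, 0 < (n : ℝ)⁻¹ • ∑ i ∈ Finset.range n, ξ i ω :=
      hω.eventually (eventually_gt_nhds hμpos)
    obtain ⟨N, hN⟩ := hpos.exists_forall_of_atTop
    have hNpos : ∀ j, N ≤ j → 0 ≤ ∑ i ∈ Finset.range j, ξ i ω := by
      intro j hj
      have h := hN j hj
      rw [smul_eq_mul] at h
      by_contra hneg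
      push_neg at hneg
      have : (j : ℝ)⁻¹ * ∑ i ∈ Finset.range j, ξ i ω ≤ 0 :=
        mul_nonpos_of_nonneg_of_nonpos (by positivity) hneg.le
      linarith
    have hsub : (Set.range fun j => ∑ i ∈ Finset.range j, ξ i ω)
        ⊆ ((fun j => ∑ i ∈ Finset.range j, ξ i ω) '' Set.Iio N) ∪ Set.Ici 0 := by
      rintro y ⟨j, rfl⟩
      by_cases hj : j < N
      · exact Or.inl ⟨j, hj, rfl⟩
      · exact Or.inr (hNpos j (not_lt.1 hj))
    exact (((Set.finite_Iio N).image _).bddBelow.union bddBelow_Ici).mono hsub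
  exact ae_iff.1 hae

end Stmt2Aux

/-- For a random walk with i.i.d. jumps with positive mean, if
`F₊(Δ) = P(ξ ≥ Δ) > 0` then for any `n ≥ 1`,
`∑_{k ≥ n} P(S k ∈ [x, x+Δ)) ≤ P(S n + S̲⁽ⁿ⁾ < x + Δ) / (γ F₊(Δ))`,
where `S̲⁽ⁿ⁾ = inf_{k ≥ n} (S k - S n)` and `γ = P(inf_{k ≥ 0} S k = 0)`. -/
theorem stmt2 {Ω : Type*} [MeasureSpace Ω] [IsProbabilityMeasure (ℙ : Measure Ω)]
    (ξ : ℕ → Ω → ℝ)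
    (hmeas : ∀ n, Measurable (ξ n))
    (hindep : iIndepFun ξ ℙ)
    (hident : ∀ n, IdentDistrib (ξ n) (ξ 0) ℙ ℙ)
    (hint : Integrable (ξ 0) ℙ)
    (hμpos : 0 < ∫ ω, ξ 0 ω ∂ℙ)
    (S : ℕ → Ω → ℝ) (hS : ∀ n ω, S n ω = ∑ i ∈ Finset.range n, ξ i ω)
    (γ : ENNReal) (hγ : γ = ℙ {ω | (⨅ k : ℕ, S k ω) = 0})
    (x Δ : ℝ) (hΔ : 0 < Δ)
    (hF : 0 < ℙ {ω | Δ ≤ ξ 0 ω})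
    (n : ℕ) (hn : 1 ≤ n) :
    ∑' k : ℕ, ℙ {ω | S (n + k) ω ∈ Set.Ico x (x + Δ)} ≤
      ℙ {ω | S n ω + (⨅ k : ℕ, (S (n + k) ω - S n ω)) < x + Δ} /
        (γ * ℙ {ω | Δ ≤ ξ 0 ω}) := by
  classical
  set F : ENNReal := ℙ {ω | Δ ≤ ξ 0 ω} with hFdef
  set B : ℕ → Set Ω := fun k => {ω | (∑ i ∈ Finset.range k, ξ i ω) ∈ Set.Ico x (x + Δ)}
    with hBdef
  set C : ℕ → Set Ω := fun k => {ω | Δ ≤ ξ k ω} with hCdef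
  set D : ℕ → Set Ω := fun c => {ω | ∀ j : ℕ, 0 ≤ ∑ m ∈ Finset.range j, ξ (c + m) ω}
    with hDdef
  set E : ℕ → Set Ω := fun k => B k ∩ (C k ∩ D (k + 1)) with hEdef
  set N : Set Ω := {ω | ¬ BddBelow (Set.range fun j => ∑ i ∈ Finset.range j, ξ i ω)}
    with hNdef
  have hN : ℙ N = 0 := badNull hmeas hindep hident hint hμpos
  set γ' : ENNReal := ℙ (D 0) with hγ'def
  set A : Set Ω := {ω | S n ω + (⨅ k : ℕ, (S (n + k) ω - S n ω)) < x + Δ} with hAdef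
  -- events in the statement, rewritten
  have hBev : ∀ k, {ω | S (n + k) ω ∈ Set.Ico x (x + Δ)} = B (n + k) := by
    intro k; ext ω; simp [hBdef, hS]
  -- measurability
  have hSm : ∀ k, Measurable (fun ω => ∑ i ∈ Finset.range k, ξ i ω) :=
    fun k => Finset.measurable_sum _ fun i _ => hmeas i
  have hBm : ∀ k, MeasurableSet (B k) := fun k => (hSm k) measurableSet_Ico
  have hCm : ∀ k, MeasurableSet (C k) :=
    fun k => measurableSet_le measurable_const (hmeas k)
  have hDm : ∀ c, MeasurableSet (D c) := by
    intro c
    have : D c = ⋂ j : ℕ, {ω | 0 ≤ ∑ m ∈ Finset.range j, ξ (c + m) ω} := by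
      ext ω; simp [hDdef]
    rw [this]
    exact MeasurableSet.iInter fun j => measurableSet_le measurable_const
      (Finset.measurable_sum _ fun m _ => hmeas _)
  have hEm : ∀ k, MeasurableSet (E k) :=
    fun k => (hBm k).inter ((hCm k).inter (hDm (k + 1)))
  -- key arithmetic: on E a with a < b, the walk at time b is above x + Δ
  have key : ∀ a b : ℕ, a < b → ∀ ω, ω ∈ E a →
      x + Δ ≤ ∑ i ∈ Finset.range b, ξ i ω := by
    intro a b hab ω hω
    obtain ⟨h1, h2, h3⟩ := hω
    have h1' : x ≤ ∑ i ∈ Finset.range a, ξ i ω := h1.1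
    have h2' : Δ ≤ ξ a ω := h2
    have h3' : 0 ≤ ∑ m ∈ Finset.range (b - (a + 1)), ξ (a + 1 + m) ω := h3 _
    have hb : b = (a + 1) + (b - (a + 1)) := by omega
    rw [hb, Finset.sum_range_add]
    rw [Finset.sum_range_succ]
    have : ∀ m ∈ Finset.range (b - (a + 1)), ξ (a + 1 + m) ω = ξ (a + 1 + m) ω :=
      fun m _ => rfl
    linarith
  -- disjointness
  have hdisj : ∀ a b : ℕ, a < b → Disjoint (E a) (E b) := by
    intro a b hab
    rw [Set.disjoint_left]
    intro ω hωa hωb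
    have := key a b hab ω hωa
    have hlt : (∑ i ∈ Finset.range b, ξ i ω) < x + Δ := hωb.1.2
    linarith
  have hEdisj : Pairwise (Function.onFun Disjoint fun k => E (n + k)) := by
    intro a b hab
    rcases hab.lt_or_gt with h | h
    · exact hdisj (n + a) (n + b) (by omega)
    · exact (hdisj (n + b) (n + a) (by omega)).symm
  -- probability of E
  have hCF : ∀ k, ℙ (C k) = F := by
    intro k
    have : C k = ξ k ⁻¹' Set.Ici Δ := rfl
    have h0 : {ω | Δ ≤ ξ 0 ω} = ξ 0 ⁻¹' Set.Ici Δ := rfl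
    rw [hFdef, this, h0]
    exact (hident k).measure_mem_eq measurableSet_Ici
  have hDγ : ∀ c, ℙ (D c) = γ' := by
    intro c
    rw [hγ'def, hDdef]
    simp only
    rw [gammaShift hmeas hindep hident c]
    have : (fun ω => ∀ j : ℕ, 0 ≤ ∑ m ∈ Finset.range j, ξ (0 + m) ω)
        = fun ω => ∀ j : ℕ, 0 ≤ ∑ m ∈ Finset.range j, ξ m ω := by
      simp
    exact (congrArg ℙ (by ext ω; simp)).symm
  have hE : ∀ k, ℙ (E k) = ℙ (B k) * (F * γ') := by
    intro k
    rw [hEdef]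
    simp only
    rw [blockIndep hmeas hindep k x Δ]
    show ℙ (B k) * (ℙ (C k) * ℙ (D (k + 1))) = ℙ (B k) * (F * γ')
    rw [hCF k, hDγ (k + 1)]
  -- union bound
  have hUnion : ℙ (⋃ k, E (n + k)) = ∑' k, ℙ (E (n + k)) :=
    measure_iUnion hEdisj fun k => hEm _
  -- B (n+k) ⊆ A ∪ N
  have hBA : ∀ k, B (n + k) ⊆ A ∪ N := by
    intro k ω hω
    by_cases hbb : BddBelow (Set.range fun j => ∑ i ∈ Finset.range j, ξ i ω)
    · left
      have hbb2 : BddBelow (Set.range fun j => S (n + j) ω - S n ω) := by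
        obtain ⟨b, hb⟩ := hbb
        refine ⟨b - S n ω, ?_⟩
        rintro y ⟨j, rfl⟩
        show b - S n ω ≤ S (n + j) ω - S n ω
        have h2' : b ≤ ∑ i ∈ Finset.range (n + j), ξ i ω :=
          hb (Set.mem_range_self (f := fun j => ∑ i ∈ Finset.range j, ξ i ω) (n + j))
        rw [hS (n + j)]
        linarith
      have hle : (⨅ j : ℕ, (S (n + j) ω - S n ω)) ≤ S (n + k) ω - S n ω :=
        ciInf_le hbb2 k
      have hlt : S (n + k) ω < x + Δ := by rw [hS]; exact hω.2
      show S n ω + (⨅ j : ℕ, (S (n + j) ω - S n ω)) < x + Δ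
      linarith
    · right; exact hbb
  have hAN : ℙ (A ∪ N) ≤ ℙ A := by
    calc ℙ (A ∪ N) ≤ ℙ A + ℙ N := measure_union_le _ _
    _ = ℙ A := by rw [hN, add_zero]
  -- γ ≤ γ'
  have hγγ' : γ ≤ γ' := by
    have hsub : {ω | (⨅ k : ℕ, S k ω) = 0} ⊆ D 0 ∪ N := by
      intro ω hω
      by_cases hbb : BddBelow (Set.range fun j => ∑ i ∈ Finset.range j, ξ i ω)
      · left
        intro j
        have heq : (fun k => S k ω) = fun k => ∑ i ∈ Finset.range k, ξ i ω := by
          funext k; exact hS k ω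
        have hbb' : BddBelow (Set.range fun k => S k ω) := by rw [heq]; exact hbb
        have := ciInf_le hbb' j
        rw [hω] at this
        simpa [hS] using this
      · right; exact hbb
    calc γ = ℙ {ω | (⨅ k : ℕ, S k ω) = 0} := hγ
    _ ≤ ℙ (D 0 ∪ N) := measure_mono hsub
    _ ≤ ℙ (D 0) + ℙ N := measure_union_le _ _
    _ = γ' := by rw [hN, add_zero, hγ'def]
  -- final assembly
  by_cases hA0 : ℙ A = 0
  · have hzero : ∀ k : ℕ, ℙ {ω | S (n + k) ω ∈ Set.Ico x (x + Δ)} = 0 := by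
      intro k
      rw [hBev k]
      refine le_antisymm ?_ zero_le
      calc ℙ (B (n + k)) ≤ ℙ (A ∪ N) := measure_mono (hBA k)
      _ ≤ ℙ A := hAN
      _ = 0 := hA0
    have hz : ∑' k : ℕ, ℙ {ω | S (n + k) ω ∈ Set.Ico x (x + Δ)} = 0 := by
      simp only [hzero, tsum_zero]
    rw [hz]
    exact zero_le
  · rw [ENNReal.le_div_iff_mul_le (Or.inr hA0)
      (Or.inl (ENNReal.mul_ne_top (by rw [hγ]; exact measure_ne_top _ _)
        (measure_ne_top _ _)))]
    calc (∑' k : ℕ, ℙ {ω | S (n + k) ω ∈ Set.Ico x (x + Δ)}) * (γ * F)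
        = ∑' k : ℕ, ℙ (B (n + k)) * (γ * F) := by
          rw [← ENNReal.tsum_mul_right]
          exact tsum_congr fun k => by rw [hBev k]
      _ ≤ ∑' k : ℕ, ℙ (E (n + k)) := by
          refine ENNReal.tsum_le_tsum fun k => ?_
          rw [hE (n + k)]
          refine mul_le_mul_right ?_ _
          calc γ * F ≤ γ' * F := mul_le_mul_left hγγ' F
          _ = F * γ' := mul_comm _ _
      _ = ℙ (⋃ k, E (n + k)) := hUnion.symm
      _ ≤ ℙ (A ∪ N) := measure_mono (Set.iUnion_subset fun k =>
          (Set.inter_subset_left).trans (hBA k))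
      _ ≤ ℙ A := hAN
end

section
/- Let a_n ≥ 0 be weights and suppose F_-(t) := P(ξ < −t) is a locally regularly varying function of index −β with β > 2, E[ξ] = μ > 0 and E[ξ²] < ∞. If the series Σ_n a_n F_-(n) diverges, then h(x, Δ) := Σ_n a_n P(S_n ∈ [x, x+Δ)) = ∞ for every Δ > 0 and every x. -/
open MeasureTheory ProbabilityTheory Filter
open scoped ENNReal

/-- A function is regularly varying (at infinity) of index `ρ`. -/
def RegularlyVarying (f : ℝ → ℝ) (ρ : ℝ) : Prop :=
  ∀ c : ℝ, 0 < c → Tendsto (fun x => f (c * x) / f x) atTop (nhds (c ^ ρ))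

/-- A function is locally regularly varying of index `-β`: it is regularly varying
and `f x - f (x + Δ) ~ Δ · β f(x)/x` as `x → ∞` for each fixed `Δ > 0`. -/
def LocallyRegularlyVarying (f : ℝ → ℝ) (β : ℝ) : Prop :=
  RegularlyVarying f (-β) ∧
    ∀ Δ : ℝ, 0 < Δ →
      Tendsto (fun x => (f x - f (x + Δ)) / (Δ * (β * f x / x))) atTop (nhds 1)

private lemma onejump {Ω : Type*} [MeasureSpace Ω] [IsProbabilityMeasure (ℙ : Measure Ω)]
    (ξ : ℕ → Ω → ℝ) (hmeas : ∀ n, Measurable (ξ n))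
    (hindep : iIndepFun ξ ℙ)
    (hident : ∀ n, IdentDistrib (ξ n) (ξ 0) ℙ ℙ)
    (n : ℕ) (x Δ lo hi R c : ℝ) (hΔ : 0 < Δ) (hc : 0 ≤ c)
    (hslice : ∀ t, lo ≤ t → t ≤ hi →
      c ≤ (ℙ {ω | ξ 0 ω ∈ Set.Ico (x - t) (x - t + Δ)}).toReal)
    (hjump : x + Δ - lo ≤ -R)
    (hgood : ∀ i ∈ Finset.range n, (1:ℝ≥0∞)/2 ≤
      ℙ {ω | (∑ k ∈ (Finset.range n).erase i, ξ k ω) ∈ Set.Icc lo hi ∧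
             ∀ k ∈ (Finset.range n).erase i, -R ≤ ξ k ω}) :
    (n : ℝ≥0∞) * (ENNReal.ofReal c * (1/2)) ≤
      ℙ {ω | (∑ k ∈ Finset.range n, ξ k ω) ∈ Set.Ico x (x + Δ)} := by
  classical
  set s : ℕ → Finset ℕ := fun i => (Finset.range n).erase i with hs
  set A : ℕ → Set Ω := fun i =>
    {ω | (∑ k ∈ s i, ξ k ω) ∈ Set.Icc lo hi ∧ (∀ k ∈ s i, -R ≤ ξ k ω) ∧
      ξ i ω + (∑ k ∈ s i, ξ k ω) ∈ Set.Ico x (x + Δ)} with hA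
  -- measurability of A i
  have hsummeas : ∀ i, Measurable fun ω => ∑ k ∈ s i, ξ k ω :=
    fun i => Finset.measurable_sum _ (fun k _ => hmeas k)
  have hAmeas : ∀ i, MeasurableSet (A i) := by
    intro i
    have : A i = (fun ω => ∑ k ∈ s i, ξ k ω) ⁻¹' Set.Icc lo hi ∩
        ((⋂ k ∈ s i, {ω | -R ≤ ξ k ω}) ∩
          (fun ω => ξ i ω + ∑ k ∈ s i, ξ k ω) ⁻¹' Set.Ico x (x + Δ)) := by
      ext ω
      simp only [hA, Set.mem_setOf_eq, Set.mem_inter_iff, Set.mem_preimage,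
        Set.mem_iInter]
    rw [this]
    refine ((hsummeas i) measurableSet_Icc).inter (MeasurableSet.inter ?_ ?_)
    · exact MeasurableSet.iInter fun k => MeasurableSet.iInter fun _ =>
        measurableSet_le measurable_const (hmeas k)
    · exact ((hmeas i).add (hsummeas i)) measurableSet_Ico
  -- each A i has probability at least c/2
  have hAbound : ∀ i ∈ Finset.range n, ENNReal.ofReal c * (1/2) ≤ ℙ (A i) := by
    intro i hmem
    set X : Ω → ({k // k ∈ s i} → ℝ) := fun ω k => ξ k ω with hX
    have hXmeas : Measurable X := measurable_pi_lambda _ fun k => hmeas k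
    have hsummeas' : Measurable fun v : {k // k ∈ s i} → ℝ => ∑ k, v k :=
      Finset.measurable_sum _ (fun k _ => measurable_pi_apply k)
    set g : Set ({k // k ∈ s i} → ℝ) :=
      (fun v : {k // k ∈ s i} → ℝ => ∑ k, v k) ⁻¹' Set.Icc lo hi ∩
        ⋂ k, (fun v : {k // k ∈ s i} → ℝ => v k) ⁻¹' Set.Ici (-R) with hg
    have hgmeas : MeasurableSet g :=
      (hsummeas' measurableSet_Icc).inter
        (MeasurableSet.iInter fun k => (measurable_pi_apply k) measurableSet_Ici)
    have hgmem : ∀ v, v ∈ g ↔ ((∑ k, v k) ∈ Set.Icc lo hi ∧ ∀ k, -R ≤ v k) := by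
      intro v
      simp [hg, Set.mem_iInter]
    set C : Set (({k // k ∈ s i} → ℝ) × ℝ) :=
      Prod.fst ⁻¹' g ∩
        (fun p : ({k // k ∈ s i} → ℝ) × ℝ => p.2 + ∑ k, p.1 k) ⁻¹'
          Set.Ico x (x + Δ) with hC
    have hCmeas : MeasurableSet C :=
      (measurable_fst hgmeas).inter
        ((measurable_snd.add (hsummeas'.comp measurable_fst)) measurableSet_Ico)
    have hCmem : ∀ p : ({k // k ∈ s i} → ℝ) × ℝ,
        p ∈ C ↔ (p.1 ∈ g ∧ p.2 + ∑ k, p.1 k ∈ Set.Ico x (x + Δ)) := by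
      intro p; simp [hC]
    have hAeq : A i = (fun ω => (X ω, ξ i ω)) ⁻¹' C := by
      ext ω
      simp only [hA, Set.mem_setOf_eq, Set.mem_preimage]
      rw [hCmem]
      simp only [hgmem]
      rw [Finset.sum_coe_sort (s i) (fun k => ξ k ω)]
      constructor
      · rintro ⟨h1, h2, h3⟩
        exact ⟨⟨h1, fun k => h2 k k.2⟩, h3⟩
      · rintro ⟨⟨h1, h2⟩, h3⟩
        exact ⟨h1, fun k hk => h2 ⟨k, hk⟩, h3⟩
    have hIF : IndepFun X (ξ i) ℙ := by
      have hd : Disjoint (s i) ({i} : Finset ℕ) := by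
        simp [hs, Finset.disjoint_singleton_right]
      have h := hindep.indepFun_finset (s i) {i} hd hmeas
      exact h.comp measurable_id
        (measurable_pi_apply (⟨i, by simp⟩ : {k // k ∈ ({i} : Finset ℕ)}))
    haveI : IsProbabilityMeasure (Measure.map X ℙ) :=
      Measure.isProbabilityMeasure_map hXmeas.aemeasurable
    haveI : IsProbabilityMeasure (Measure.map (ξ i) ℙ) :=
      Measure.isProbabilityMeasure_map (hmeas i).aemeasurable
    have hmapeq : Measure.map (fun ω => (X ω, ξ i ω)) ℙ =
        (Measure.map X ℙ).prod (Measure.map (ξ i) ℙ) :=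
      (indepFun_iff_map_prod_eq_prod_map_map hXmeas.aemeasurable
        (hmeas i).aemeasurable).1 hIF
    have hPA : ℙ (A i) = ((Measure.map X ℙ).prod (Measure.map (ξ i) ℙ)) C := by
      rw [hAeq, ← hmapeq, Measure.map_apply (hXmeas.prodMk (hmeas i)) hCmeas]
    rw [hPA, Measure.prod_apply hCmeas]
    have hgP : (1:ℝ≥0∞)/2 ≤ Measure.map X ℙ g := by
      rw [Measure.map_apply hXmeas hgmeas]
      have : X ⁻¹' g = {ω | (∑ k ∈ s i, ξ k ω) ∈ Set.Icc lo hi ∧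
          ∀ k ∈ s i, -R ≤ ξ k ω} := by
        ext ω
        simp only [Set.mem_preimage, Set.mem_setOf_eq]
        rw [hgmem]
        rw [Finset.sum_coe_sort (s i) (fun k => ξ k ω)]
        constructor
        · rintro ⟨h1, h2⟩; exact ⟨h1, fun k hk => h2 ⟨k, hk⟩⟩
        · rintro ⟨h1, h2⟩; exact ⟨h1, fun k => h2 k k.2⟩
      rw [this]
      exact hgood i hmem
    calc ENNReal.ofReal c * (1/2) ≤ ENNReal.ofReal c * Measure.map X ℙ g :=
          mul_le_mul_right hgP _
      _ = ∫⁻ v, g.indicator (fun _ => ENNReal.ofReal c) v ∂(Measure.map X ℙ) := by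
          rw [lintegral_indicator_const hgmeas]
      _ ≤ ∫⁻ v, (Measure.map (ξ i) ℙ) (Prod.mk v ⁻¹' C) ∂(Measure.map X ℙ) := by
          apply lintegral_mono
          intro v
          dsimp only
          by_cases hv : v ∈ g
          · rw [Set.indicator_of_mem hv]
            have hv' := (hgmem v).1 hv
            have hslice_eq : Prod.mk v ⁻¹' C =
                Set.Ico (x - ∑ k, v k) (x - ∑ k, v k + Δ) := by
              ext u
              simp only [Set.mem_preimage]
              rw [hCmem]
              simp only [hv, true_and, Set.mem_Ico]
              constructor
              · rintro ⟨h1, h2⟩; constructor <;> linarith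
              · rintro ⟨h1, h2⟩; constructor <;> linarith
            rw [hslice_eq, (hident i).map_eq,
              Measure.map_apply (hmeas 0) measurableSet_Ico]
            have : (ξ 0) ⁻¹' Set.Ico (x - ∑ k, v k) (x - ∑ k, v k + Δ) =
                {ω | ξ 0 ω ∈ Set.Ico (x - ∑ k, v k) (x - ∑ k, v k + Δ)} := rfl
            rw [this]
            exact ENNReal.ofReal_le_of_le_toReal (hslice _ hv'.1.1 hv'.1.2)
          · rw [Set.indicator_of_notMem hv]
            exact zero_le
  -- the A i are pairwise disjoint
  have hdisj : (↑(Finset.range n) : Set ℕ).PairwiseDisjoint A := by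
    intro i hmem j hmem' hij
    simp only [Function.onFun]
    rw [Set.disjoint_left]
    rintro ω ⟨hIcc, _hall, hIco⟩ ⟨_hIcc', hall', _hIco'⟩
    have h1 : ξ i ω < x + Δ - lo := by
      have h3 := hIco.2
      have h4 := hIcc.1
      linarith
    have h2 : -R ≤ ξ i ω := by
      apply hall' i
      simp only [hs, Finset.mem_erase]
      exact ⟨hij, hmem⟩
    linarith
  -- union is contained in the target
  have hsub : (⋃ i ∈ Finset.range n, A i) ⊆
      {ω | (∑ k ∈ Finset.range n, ξ k ω) ∈ Set.Ico x (x + Δ)} := by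
    intro ω hω
    simp only [Set.mem_iUnion] at hω
    obtain ⟨i, hmem, h1, h2, h3⟩ := hω
    have heq : ξ i ω + ∑ k ∈ s i, ξ k ω = ∑ k ∈ Finset.range n, ξ k ω := by
      simp only [hs]
      exact Finset.add_sum_erase (Finset.range n) (fun k => ξ k ω) hmem
    rwa [heq] at h3
  calc (n : ℝ≥0∞) * (ENNReal.ofReal c * (1/2))
      = ∑ _i ∈ Finset.range n, (ENNReal.ofReal c * (1/2)) := by
        rw [Finset.sum_const, Finset.card_range, nsmul_eq_mul]
    _ ≤ ∑ i ∈ Finset.range n, ℙ (A i) := Finset.sum_le_sum hAbound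
    _ = ℙ (⋃ i ∈ Finset.range n, A i) :=
        (measure_biUnion_finset hdisj (fun i _ => hAmeas i)).symm
    _ ≤ _ := measure_mono hsub

set_option maxHeartbeats 3200000 in
/-- If the weights `aₙ ≥ 0`, the left tail `F₋(t) = P(ξ < -t)` is a
locally regularly varying function of index `-β` with `β > 2`, `E ξ = μ > 0`,
`E ξ² < ∞`, and `∑ₙ aₙ F₋(n)` diverges, then
`h(x, Δ) = ∑ₙ aₙ P(Sₙ ∈ [x, x+Δ)) = ∞` for every `Δ > 0` and every `x`. -/
theorem stmt9 {Ω : Type*} [MeasureSpace Ω] [IsProbabilityMeasure (ℙ : Measure Ω)]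
    (ξ : ℕ → Ω → ℝ)
    (hmeas : ∀ n, Measurable (ξ n))
    (hindep : iIndepFun ξ ℙ)
    (hident : ∀ n, IdentDistrib (ξ n) (ξ 0) ℙ ℙ)
    (hμpos : 0 < ∫ ω, ξ 0 ω ∂ℙ)
    (hsq : Integrable (fun ω => (ξ 0 ω) ^ 2) ℙ)
    (S : ℕ → Ω → ℝ) (hS : ∀ n ω, S n ω = ∑ i ∈ Finset.range n, ξ i ω)
    (Fm : ℝ → ℝ) (hFm : ∀ t, Fm t = (ℙ {ω | ξ 0 ω < -t}).toReal)
    (β : ℝ) (hβ : 2 < β)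
    (hlrv : LocallyRegularlyVarying Fm β)
    (a : ℕ → ℝ) (ha : ∀ n, 0 ≤ a n)
    (hdiv : ¬ Summable (fun n : ℕ => a n * Fm n)) :
    ∀ Δ : ℝ, 0 < Δ → ∀ x : ℝ,
      (∑' n : ℕ, ENNReal.ofReal (a n) * ℙ {ω | S n ω ∈ Set.Ico x (x + Δ)}) = ⊤ := by
  intro Δ hΔ x
  classical
  by_contra htop
  apply hdiv
  set μR := ∫ ω, ξ 0 ω ∂ℙ with hμR
  have hμpos' : 0 < μR := hμpos
  have hβ0 : (0:ℝ) < β := by linarith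
  have hMem2 : MemLp (ξ 0) 2 ℙ :=
    (memLp_two_iff_integrable_sq (hmeas 0).aestronglyMeasurable).2 hsq
  have hMem2' : ∀ k, MemLp (ξ k) 2 ℙ := fun k => (hident k).symm.memLp_snd hMem2
  have hInt : ∀ k, Integrable (ξ k) ℙ := fun k => (hMem2' k).integrable one_le_two
  have hIntEq : ∀ k, ∫ ω, ξ k ω ∂ℙ = μR := fun k => (hident k).integral_eq
  set σ2 := variance (ξ 0) ℙ with hσ2
  have hσ2nonneg : 0 ≤ σ2 := variance_nonneg _ _
  set Cm := ∫ ω, (ξ 0 ω)^2 ∂ℙ with hCm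
  have hCmnonneg : 0 ≤ Cm := integral_nonneg fun ω => sq_nonneg _
  -- basic facts about Fm
  have hFm_nonneg : ∀ t, 0 ≤ Fm t := fun t => (hFm t) ▸ ENNReal.toReal_nonneg
  have hFm_anti : ∀ {t u : ℝ}, t ≤ u → Fm u ≤ Fm t := by
    intro t u h
    rw [hFm, hFm]
    refine ENNReal.toReal_mono (measure_ne_top _ _) (measure_mono ?_)
    intro ω hω
    simp only [Set.mem_setOf_eq] at *
    linarith
  have hP : ∀ b : ℝ, ℙ {ω | ξ 0 ω < b} = ENNReal.ofReal (Fm (-b)) := by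
    intro b
    rw [hFm, neg_neg, ENNReal.ofReal_toReal (measure_ne_top _ _)]
  have hIcoP : ∀ u v : ℝ, u ≤ v →
      (ℙ {ω | ξ 0 ω ∈ Set.Ico u v}).toReal = Fm (-v) - Fm (-u) := by
    intro u v huv
    have hset : {ω | ξ 0 ω ∈ Set.Ico u v} = {ω | ξ 0 ω < v} \ {ω | ξ 0 ω < u} := by
      ext ω
      simp only [Set.mem_setOf_eq, Set.mem_Ico, Set.mem_diff, not_lt]
      tauto
    have hsubm : {ω | ξ 0 ω < u} ⊆ {ω | ξ 0 ω < v} := by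
      intro ω hω; simp only [Set.mem_setOf_eq] at *; linarith
    have hmm : MeasurableSet {ω | ξ 0 ω < u} := (hmeas 0) measurableSet_Iio
    rw [hset, measure_diff hsubm hmm.nullMeasurableSet (measure_ne_top _ _),
      hP, hP, ← ENNReal.ofReal_sub _ (hFm_nonneg _),
      ENNReal.toReal_ofReal (by linarith [hFm_anti (neg_le_neg huv)])]
  have hFm_pos : ∀ t, 0 < Fm t := by
    by_contra hcon
    push_neg at hcon
    obtain ⟨t0, ht0⟩ := hcon
    have h0 : Fm t0 = 0 := le_antisymm ht0 (hFm_nonneg t0)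
    have hz : ∀ z : ℝ, |t0| ≤ z → Fm z = 0 := fun z hzz =>
      le_antisymm (h0 ▸ hFm_anti (le_trans (le_abs_self t0) hzz)) (hFm_nonneg z)
    have hev : (fun z => Fm (2 * z) / Fm z) =ᶠ[atTop] (fun _ => (0:ℝ)) := by
      filter_upwards [eventually_ge_atTop (max |t0| 0)] with z hzz
      have hz1 : |t0| ≤ z := le_trans (le_max_left _ _) hzz
      have hz0 : 0 ≤ z := le_trans (le_max_right _ _) hzz
      have hz2 : |t0| ≤ 2 * z := by linarith
      simp [hz z hz1, hz _ hz2]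
    have htend : Tendsto (fun _ : ℝ => (0:ℝ)) atTop (nhds ((2:ℝ) ^ (-β))) :=
      (hlrv.1 2 (by norm_num)).congr' hev
    have heq := tendsto_nhds_unique htend tendsto_const_nhds
    have hpos := Real.rpow_pos_of_pos (by norm_num : (0:ℝ) < 2) (-β)
    rw [heq] at hpos
    exact lt_irrefl 0 hpos
  have hFm_markov : ∀ t : ℝ, 0 < t → Fm t ≤ Cm / t^2 := by
    intro t ht
    have hsub : {ω | ξ 0 ω < -t} ⊆ {ω | t^2 ≤ (ξ 0 ω)^2} := by
      intro ω hω
      simp only [Set.mem_setOf_eq] at *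
      nlinarith
    have h1 := mul_meas_ge_le_integral_of_nonneg (μ := ℙ) (f := fun ω => (ξ 0 ω)^2)
      (ae_of_all _ fun ω => sq_nonneg _) hsq (t^2)
    have h2 : Fm t ≤ (ℙ {ω | t^2 ≤ (ξ 0 ω)^2}).toReal := by
      rw [hFm]
      exact ENNReal.toReal_mono (measure_ne_top _ _) (measure_mono hsub)
    rw [le_div_iff₀ (by positivity)]
    calc Fm t * t^2 ≤ (ℙ {ω | t^2 ≤ (ξ 0 ω)^2}).toReal * t^2 :=
          mul_le_mul_of_nonneg_right h2 (by positivity)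
      _ = t^2 * (ℙ {x_1 | t^2 ≤ ξ 0 x_1 ^ 2}).toReal := mul_comm _ _
      _ ≤ Cm := h1
  -- regular variation thresholds
  set ρ := (2*μR) ^ (-β) with hρdef
  have hρpos : 0 < ρ := Real.rpow_pos_of_pos (by positivity) _
  obtain ⟨X2, hX2⟩ : ∃ X2 : ℝ, ∀ z : ℝ, X2 ≤ z → ρ/2 * Fm z ≤ Fm (2*μR*z) := by
    have h := (hlrv.1 (2*μR) (by positivity)).eventually
      (eventually_ge_nhds (by linarith : ρ/2 < ρ))
    obtain ⟨X2, h2⟩ := eventually_atTop.1 h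
    exact ⟨X2, fun z hz => (le_div_iff₀ (hFm_pos z)).1 (h2 z hz)⟩
  obtain ⟨X1, hX1⟩ : ∃ X1 : ℝ, ∀ z : ℝ, X1 ≤ z →
      1 ≤ z ∧ β/2*Δ*(Fm z / z) ≤ Fm z - Fm (z+Δ) := by
    have h := (hlrv.2 Δ hΔ).eventually (eventually_ge_nhds (by norm_num : (1:ℝ)/2 < 1))
    obtain ⟨X1, h1⟩ := eventually_atTop.1 (h.and (eventually_ge_atTop 1))
    refine ⟨X1, fun z hz => ⟨(h1 z hz).2, ?_⟩⟩
    have hz1 : (1:ℝ) ≤ z := (h1 z hz).2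
    have hzpos : (0:ℝ) < z := by linarith
    have hden : 0 < Δ * (β * Fm z / z) :=
      mul_pos hΔ (div_pos (mul_pos hβ0 (hFm_pos z)) hzpos)
    have h2 := (le_div_iff₀ hden).1 (h1 z hz).1
    calc β/2*Δ*(Fm z / z) = 1/2 * (Δ * (β * Fm z / z)) := by ring
      _ ≤ _ := h2
  set cstar := β*Δ*ρ/(16*μR) with hcstar
  have hcstarpos : 0 < cstar := by rw [hcstar]; positivity
  -- the key eventual lower bound
  have key : ∀ᶠ n : ℕ in atTop, ENNReal.ofReal (cstar * Fm n) ≤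
      ℙ {ω | S n ω ∈ Set.Ico x (x + Δ)} := by
    have hnat : Tendsto (fun n : ℕ => (n:ℝ)) atTop atTop := tendsto_natCast_atTop_atTop
    have hμn : Tendsto (fun n : ℕ => μR * (n:ℝ)) atTop atTop :=
      hnat.const_mul_atTop hμpos'
    have hμ2n : Tendsto (fun n : ℕ => μR^2 * (n:ℝ)) atTop atTop :=
      hnat.const_mul_atTop (by positivity)
    filter_upwards [eventually_ge_atTop 2, hμn.eventually_ge_atTop (4*((max X1 1) + x + Δ)),
      hμn.eventually_ge_atTop ((-(x+Δ)) * (4/3)), hμn.eventually_ge_atTop (8*(x+Δ)),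
      hμ2n.eventually_ge_atTop (64*σ2), hμ2n.eventually_ge_atTop (256*Cm),
      hnat.eventually_ge_atTop X2] with n e1 e2 e3 e4 e5 e6 e7
    have hn2R : (2:ℝ) ≤ (n:ℝ) := by exact_mod_cast e1
    have hnpos : (0:ℝ) < (n:ℝ) := by linarith
    set lo := ((n:ℝ)-1)*μR - μR/4*(n:ℝ) with hlo
    set hi := ((n:ℝ)-1)*μR + μR/4*(n:ℝ) with hhi
    set Rn := μR*(n:ℝ)/8 with hRn
    have hRnpos : 0 < Rn := by rw [hRn]; positivity
    set cn := β*Δ*ρ/(8*μR) * (Fm n / n) with hcn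
    have hcnnonneg : 0 ≤ cn := by
      rw [hcn]
      have := hFm_nonneg (n:ℝ)
      positivity
    have hlo_ge : μR*(n:ℝ)/4 ≤ lo := by rw [hlo]; nlinarith
    -- the slice lower bound
    have hslice : ∀ t, lo ≤ t → t ≤ hi →
        cn ≤ (ℙ {ω | ξ 0 ω ∈ Set.Ico (x - t) (x - t + Δ)}).toReal := by
      intro t hts hth
      have hab : x - t ≤ x - t + Δ := by linarith
      rw [hIcoP _ _ hab, (show -(x - t + Δ) = t - x - Δ by ring),
        (show -(x - t) = t - x by ring)]
      have hlot : μR*(n:ℝ)/4 ≤ t := le_trans hlo_ge hts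
      have hy1 : max X1 1 ≤ t - x - Δ := by linarith
      have hy1' : X1 ≤ t - x - Δ := le_trans (le_max_left _ _) hy1
      have hypos : (0:ℝ) < t - x - Δ :=
        lt_of_lt_of_le (by norm_num) (le_trans (le_max_right _ _) hy1)
      have hmul : ((n:ℝ)-1)*μR ≤ μR*(n:ℝ) := by nlinarith
      have hyle : t - x - Δ ≤ 2*μR*(n:ℝ) := by
        rw [hhi] at hth
        linarith
      have hstep := hX1 (t - x - Δ) hy1'
      have hstep1 : β/2*Δ*(Fm (t - x - Δ) / (t - x - Δ)) ≤
          Fm (t - x - Δ) - Fm (t - x - Δ + Δ) := hstep.2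
      rw [(show t - x - Δ + Δ = t - x by ring)] at hstep1
      refine le_trans ?_ hstep1
      have hFy2 : Fm (2*μR*(n:ℝ)) ≤ Fm (t - x - Δ) := hFm_anti hyle
      have hX2n := hX2 (n:ℝ) e7
      have hfrac : ρ/2 * Fm n / (2*μR*(n:ℝ)) ≤ Fm (t - x - Δ) / (t - x - Δ) :=
        div_le_div₀ (hFm_nonneg _) (le_trans hX2n hFy2) hypos hyle
      calc cn = β/2*Δ*(ρ/2 * Fm n / (2*μR*(n:ℝ))) := by
            rw [hcn]
            field_simp
            ring
        _ ≤ β/2*Δ*(Fm (t - x - Δ) / (t - x - Δ)) := by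
            apply mul_le_mul_of_nonneg_left hfrac
            positivity
    have hjump : x + Δ - lo ≤ -Rn := by rw [hRn]; linarith
    -- the good-event lower bound
    have hgood : ∀ i ∈ Finset.range n, (1:ℝ≥0∞)/2 ≤
        ℙ {ω | (∑ k ∈ (Finset.range n).erase i, ξ k ω) ∈ Set.Icc lo hi ∧
               ∀ k ∈ (Finset.range n).erase i, -Rn ≤ ξ k ω} := by
      intro i hmem
      set s := (Finset.range n).erase i with hsdef
      have hcardR : (s.card : ℝ) = (n:ℝ) - 1 := by
        rw [hsdef, Finset.card_erase_of_mem hmem, Finset.card_range,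
          Nat.cast_sub (by omega)]
        norm_num
      set T : Ω → ℝ := ∑ k ∈ s, ξ k with hT
      have hTapp : ∀ ω, T ω = ∑ k ∈ s, ξ k ω := fun ω => by
        rw [hT]; simp [Finset.sum_apply]
      have hTmem : MemLp T 2 ℙ := memLp_finset_sum' s (fun k _ => hMem2' k)
      have hTint : ∫ ω, T ω ∂ℙ = ((n:ℝ)-1) * μR := by
        calc ∫ ω, T ω ∂ℙ = ∑ k ∈ s, ∫ ω, ξ k ω ∂ℙ := by
              rw [hT]
              simp only [Finset.sum_apply]
              exact integral_finset_sum s fun k _ => hInt k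
          _ = ∑ _k ∈ s, μR := Finset.sum_congr rfl fun k _ => hIntEq k
          _ = ((n:ℝ)-1) * μR := by rw [Finset.sum_const, nsmul_eq_mul, hcardR]
      have hTvar : variance T ℙ = ((n:ℝ)-1) * σ2 := by
        calc variance T ℙ = ∑ k ∈ s, variance (ξ k) ℙ :=
              IndepFun.variance_sum (fun k _ => hMem2' k)
                (fun k _ l _ hkl => hindep.indepFun hkl)
          _ = ∑ _k ∈ s, σ2 := Finset.sum_congr rfl fun k _ => (hident k).variance_eq
          _ = ((n:ℝ)-1) * σ2 := by rw [Finset.sum_const, nsmul_eq_mul, hcardR]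
      have hcheb := meas_ge_le_variance_div_sq (μ := ℙ) hTmem
        (c := μR/4*(n:ℝ)) (by positivity)
      rw [hTvar] at hcheb
      have hchebR : ℙ {ω | μR/4*(n:ℝ) ≤ |T ω - ((n:ℝ)-1)*μR|} ≤ ENNReal.ofReal (1/4) := by
        refine le_trans (le_of_eq ?_) (le_trans hcheb (ENNReal.ofReal_le_ofReal ?_))
        · rw [hTint]
        · rw [div_le_iff₀ (by positivity)]
          nlinarith [mul_le_mul_of_nonneg_right e5 (by linarith : (0:ℝ) ≤ (n:ℝ)-1),
            sq_nonneg μR]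
      have hU : ℙ (⋃ k ∈ s, {ω | ξ k ω < -Rn}) ≤ ENNReal.ofReal (1/4) := by
        calc ℙ (⋃ k ∈ s, {ω | ξ k ω < -Rn}) ≤ ∑ k ∈ s, ℙ {ω | ξ k ω < -Rn} :=
              measure_biUnion_finset_le s _
          _ = ∑ _k ∈ s, ENNReal.ofReal (Fm Rn) := by
              refine Finset.sum_congr rfl fun k _ => ?_
              have heq : {ω | ξ k ω < -Rn} = ξ k ⁻¹' Set.Iio (-Rn) := rfl
              rw [heq, (hident k).measure_mem_eq measurableSet_Iio]
              have heq2 : ξ 0 ⁻¹' Set.Iio (-Rn) = {ω | ξ 0 ω < -Rn} := rfl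
              rw [heq2, hP, neg_neg]
          _ = (s.card : ℝ≥0∞) * ENNReal.ofReal (Fm Rn) := by
              rw [Finset.sum_const, nsmul_eq_mul]
          _ ≤ ENNReal.ofReal (1/4) := by
              rw [← ENNReal.ofReal_natCast s.card,
                ← ENNReal.ofReal_mul (Nat.cast_nonneg _)]
              apply ENNReal.ofReal_le_ofReal
              rw [hcardR]
              have hm := hFm_markov Rn hRnpos
              have hRn2 : Rn^2 = μR^2*(n:ℝ)^2/64 := by rw [hRn]; ring
              have hRn2pos : 0 < Rn^2 := by positivity
              have step1 : ((n:ℝ)-1) * Fm Rn ≤ (n:ℝ) * (Cm/Rn^2) :=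
                mul_le_mul (by linarith) hm (hFm_nonneg _)
                  (by linarith)
              refine le_trans step1 ?_
              rw [← mul_div_assoc, div_le_iff₀ hRn2pos, hRn2]
              nlinarith [mul_le_mul_of_nonneg_right e6 (le_of_lt hnpos)]
      set G := {ω | (∑ k ∈ s, ξ k ω) ∈ Set.Icc lo hi ∧ ∀ k ∈ s, -Rn ≤ ξ k ω} with hG
      have hGmeas : MeasurableSet G := by
        have : G = (fun ω => ∑ k ∈ s, ξ k ω) ⁻¹' Set.Icc lo hi ∩
            ⋂ k, ⋂ (_ : k ∈ s), {ω | -Rn ≤ ξ k ω} := by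
          ext ω
          simp only [hG, Set.mem_setOf_eq, Set.mem_inter_iff, Set.mem_preimage,
            Set.mem_iInter]
        rw [this]
        exact ((Finset.measurable_sum _ fun k _ => hmeas k) measurableSet_Icc).inter
          (MeasurableSet.iInter fun k => MeasurableSet.iInter fun _ =>
            measurableSet_le measurable_const (hmeas k))
      have hGc : Gᶜ ⊆ {ω | μR/4*(n:ℝ) ≤ |T ω - ((n:ℝ)-1)*μR|} ∪
          ⋃ k ∈ s, {ω | ξ k ω < -Rn} := by
        intro ω hω
        simp only [hG, Set.mem_compl_iff, Set.mem_setOf_eq, not_and_or] at hω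
        rcases hω with hω | hω
        · left
          rw [Set.mem_setOf_eq, hTapp]
          rw [Set.mem_Icc, not_and_or, not_le, not_le] at hω
          rcases hω with hlt | hgt
          · refine le_abs.2 (Or.inr ?_)
            rw [hlo] at hlt
            linarith
          · refine le_abs.2 (Or.inl ?_)
            rw [hhi] at hgt
            linarith
        · right
          push_neg at hω
          obtain ⟨k, hk, hklt⟩ := hω
          simp only [Set.mem_iUnion]
          exact ⟨k, hk, by simpa using hklt⟩
      have hGcP : ℙ Gᶜ ≤ 1/2 := by
        calc ℙ Gᶜ ≤ ℙ ({ω | μR/4*(n:ℝ) ≤ |T ω - ((n:ℝ)-1)*μR|} ∪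
              ⋃ k ∈ s, {ω | ξ k ω < -Rn}) := measure_mono hGc
          _ ≤ ℙ {ω | μR/4*(n:ℝ) ≤ |T ω - ((n:ℝ)-1)*μR|} +
              ℙ (⋃ k ∈ s, {ω | ξ k ω < -Rn}) := measure_union_le _ _
          _ ≤ ENNReal.ofReal (1/4) + ENNReal.ofReal (1/4) := add_le_add hchebR hU
          _ = ENNReal.ofReal (1/2) := by
              rw [← ENNReal.ofReal_add (by norm_num) (by norm_num)]
              norm_num
          _ = 1/2 := by
              rw [ENNReal.ofReal_div_of_pos (by norm_num), ENNReal.ofReal_one,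
                ENNReal.ofReal_ofNat]
      have hsum := measure_add_measure_compl (μ := ℙ) hGmeas
      have hsum' : ℙ G + ℙ Gᶜ = 1 := by rw [hsum, measure_univ]
      have h9 : (1:ℝ≥0∞) ≤ ℙ G + 1/2 := by
        calc (1:ℝ≥0∞) = ℙ G + ℙ Gᶜ := hsum'.symm
          _ ≤ ℙ G + 1/2 := add_le_add_right hGcP _
      have h10 : (1:ℝ≥0∞) - 1/2 ≤ ℙ G := tsub_le_iff_right.2 h9
      calc (1:ℝ≥0∞)/2 = 1 - 1/2 := (ENNReal.sub_half ENNReal.one_ne_top).symm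
        _ ≤ ℙ G := h10
    -- apply the one-big-jump lemma
    have hone := onejump ξ hmeas hindep hident n x Δ lo hi Rn cn hΔ hcnnonneg
      hslice hjump hgood
    have hSset : {ω | S n ω ∈ Set.Ico x (x+Δ)} =
        {ω | (∑ k ∈ Finset.range n, ξ k ω) ∈ Set.Ico x (x+Δ)} := by
      ext ω
      rw [Set.mem_setOf_eq, Set.mem_setOf_eq, hS]
    rw [hSset]
    refine le_trans ?_ hone
    have hhalf : ENNReal.ofReal (1/2 : ℝ) = (1/2 : ℝ≥0∞) := by
      rw [ENNReal.ofReal_div_of_pos (by norm_num), ENNReal.ofReal_one,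
        ENNReal.ofReal_ofNat]
    have heq : (n : ℝ≥0∞) * (ENNReal.ofReal cn * (1/2)) =
        ENNReal.ofReal ((n:ℝ) * (cn * (1/2))) := by
      rw [← ENNReal.ofReal_natCast n, ← hhalf,
        ← ENNReal.ofReal_mul hcnnonneg,
        ← ENNReal.ofReal_mul (by positivity : (0:ℝ) ≤ (n:ℝ))]
    rw [heq]
    apply ENNReal.ofReal_le_ofReal
    have hre : (n:ℝ) * (cn * (1/2)) = cstar * Fm n := by
      rw [hcn, hcstar]
      field_simp
      ring
    rw [hre]
  -- conclude summability
  obtain ⟨N, hN⟩ := eventually_atTop.1 key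
  have hne : (∑' n, ENNReal.ofReal (a n) * ℙ {ω | S n ω ∈ Set.Ico x (x+Δ)}) ≠ ⊤ := htop
  have hle : ∑' k : ℕ, ENNReal.ofReal (cstar * (a (k+N) * Fm ((k+N : ℕ) : ℝ))) ≤
      ∑' n, ENNReal.ofReal (a n) * ℙ {ω | S n ω ∈ Set.Ico x (x+Δ)} := by
    have h1 : ∀ k : ℕ, ENNReal.ofReal (cstar * (a (k+N) * Fm ((k+N : ℕ) : ℝ))) ≤
        ENNReal.ofReal (a (k+N)) * ℙ {ω | S (k+N) ω ∈ Set.Ico x (x+Δ)} := by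
      intro k
      have hb := hN (k+N) (by omega)
      calc ENNReal.ofReal (cstar * (a (k+N) * Fm ((k+N : ℕ) : ℝ)))
          = ENNReal.ofReal (a (k+N)) * ENNReal.ofReal (cstar * Fm ((k+N : ℕ) : ℝ)) := by
            rw [show cstar * (a (k+N) * Fm ((k+N : ℕ) : ℝ)) = a (k+N) * (cstar * Fm ((k+N : ℕ) : ℝ)) from
              mul_left_comm _ _ _, ENNReal.ofReal_mul (ha _)]
        _ ≤ _ := mul_le_mul_right hb _
    calc ∑' k : ℕ, ENNReal.ofReal (cstar * (a (k+N) * Fm ((k+N : ℕ) : ℝ)))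
        ≤ ∑' k : ℕ, ENNReal.ofReal (a (k+N)) * ℙ {ω | S (k+N) ω ∈ Set.Ico x (x+Δ)} :=
          ENNReal.tsum_le_tsum h1
      _ ≤ _ := ENNReal.tsum_comp_le_tsum_of_injective (add_left_injective N) _
  have hne2 : (∑' k : ℕ, ENNReal.ofReal (cstar * (a (k+N) * Fm ((k+N : ℕ) : ℝ)))) ≠ ⊤ :=
    ne_top_of_le_ne_top hne hle
  have hsumm : Summable (fun k : ℕ => cstar * (a (k+N) * Fm ((k+N : ℕ) : ℝ))) := by
    have h := ENNReal.summable_toReal hne2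
    refine h.congr fun k => ?_
    rw [ENNReal.toReal_ofReal
      (mul_nonneg hcstarpos.le (mul_nonneg (ha _) (hFm_nonneg _)))]
  have hsumm2 : Summable (fun k : ℕ => a (k+N) * Fm ((k+N : ℕ) : ℝ)) := by
    have h := hsumm.mul_left (cstar⁻¹)
    refine h.congr fun k => ?_
    rw [inv_mul_cancel_left₀ hcstarpos.ne']
  exact (summable_nat_add_iff N).1 hsumm2
end
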